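/- Let H be a graded braided Hopf algebra generated in degree 1, with H⁰ = ℂ, paired non-degenerately with a graded braided Hopf algebra H' generated in degree 1 via a graded Hopf pairing. If φ ∈ H satisfies D_v(φ) = 0 for every v ∈ (H')¹, where D_v(φ) = φ_{(1)}⟨φ_{(2)}, v⟩, then φ is a scalar (lies in H⁰). -/

import Mathlib

open TensorProduct

lemma mul'_map_eq_pair_rid {H : Type*} [Ring H] [Algebra ℂ H]
    {H' : Type*} [Ring H'] [Algebra ℂ H']
    (P : H →ₗ[ℂ] H' →ₗ[ℂ] ℂ) (v w : H') (t : H ⊗[ℂ] H) :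
    LinearMap.mul' ℂ ℂ (TensorProduct.map (P.flip w) (P.flip v) t)
      = P (TensorProduct.rid ℂ H (TensorProduct.map LinearMap.id (P.flip v) t)) w := by
  induction t using TensorProduct.induction_on with
  | zero => simp
  | tmul a b => simp [smul_eq_mul, mul_comm]
  | add x y hx hy => simp [map_add, hx, hy]

/-- Let `H` be a graded braided Hopf algebra with `H⁰ = ℂ`,
generated in degree 1, and non-degenerately paired via a graded Hopf pairing
`P = ⟨·,·⟩` with a graded braided Hopf algebra `H'` generated in degree 1
(the Hopf pairing axiom used is `⟨φ, xy⟩ = ⟨φ₍₂₎, x⟩⟨φ₍₁₎, y⟩`, components of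
different degrees pair to zero).  If `φ ∈ H` satisfies `D_v φ = 0` for every
`v ∈ (H')¹`, where `D_v φ = φ₍₁₎ ⟨φ₍₂₎, v⟩`, then `φ` is a scalar (lies in
`H⁰ = ℂ·1`). -/
theorem derivatives_vanish_implies_constant
    {H : Type*} [Ring H] [Algebra ℂ H]
    {H' : Type*} [Ring H'] [Algebra ℂ H']
    (ℬ : ℕ → Submodule ℂ H) (𝒜 : ℕ → Submodule ℂ H')
    (hdecH : DirectSum.IsInternal ℬ) (hdecH' : DirectSum.IsInternal 𝒜)
    -- `H⁰ = ℂ`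
    (h0 : ℬ 0 = Submodule.span ℂ {(1 : H)})
    (h0' : 𝒜 0 = Submodule.span ℂ {(1 : H')})
    -- `H` and `H'` are generated by their degree-one components
    (hgenH : ∀ n : ℕ, ℬ (n + 1) ≤ Submodule.span ℂ
      {z : H | ∃ v ∈ ℬ 1, ∃ w ∈ ℬ n, z = v * w})
    (hgenH' : ∀ n : ℕ, 𝒜 (n + 1) ≤ Submodule.span ℂ
      {z : H' | ∃ v ∈ 𝒜 1, ∃ w ∈ 𝒜 n, z = v * w})
    -- the coproduct of `H` and the duality pairing
    (Δ : H →ₗ[ℂ] H ⊗[ℂ] H)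
    (P : H →ₗ[ℂ] H' →ₗ[ℂ] ℂ)
    -- non-degeneracy of the pairing
    (hnondeg₁ : ∀ φ : H, (∀ x : H', P φ x = 0) → φ = 0)
    (hnondeg₂ : ∀ x : H', (∀ φ : H, P φ x = 0) → x = 0)
    -- the pairing is graded: components of different degrees pair to zero
    (hgraded : ∀ m n : ℕ, m ≠ n → ∀ φ ∈ ℬ m, ∀ x ∈ 𝒜 n, P φ x = 0)
    -- Hopf pairing axiom `⟨φ, x y⟩ = ⟨φ₍₂₎, x⟩ ⟨φ₍₁₎, y⟩`
    (hhopf : ∀ (φ : H) (x y : H'),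
      P φ (x * y) =
        LinearMap.mul' ℂ ℂ (TensorProduct.map (P.flip y) (P.flip x) (Δ φ)))
    (φ : H)
    -- `D_v φ = φ₍₁₎ ⟨φ₍₂₎, v⟩ = 0` for all `v` of degree one in `H'`
    (hφ : ∀ v ∈ 𝒜 1,
      TensorProduct.rid ℂ H (TensorProduct.map LinearMap.id (P.flip v) (Δ φ)) = 0) :
    ∃ c : ℂ, φ = c • (1 : H) := by
  have h1H : (1 : H) ∈ ℬ 0 := by rw [h0]; exact Submodule.mem_span_singleton_self _
  have h1H' : (1 : H') ∈ 𝒜 0 := by rw [h0']; exact Submodule.mem_span_singleton_self _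
  -- key: pairing of `φ` against any product `v * w` with `v` of degree one vanishes
  have keyM : ∀ v ∈ 𝒜 1, ∀ w : H', P φ (v * w) = 0 := by
    intro v hv w
    rw [hhopf, mul'_map_eq_pair_rid, hφ v hv]
    simp
  -- hence `P φ` vanishes on every component of positive degree
  have claim1 : ∀ n : ℕ, ∀ x ∈ 𝒜 (n + 1), P φ x = 0 := by
    intro n x hx
    refine Submodule.span_induction ?_ ?_ ?_ ?_ (hgenH' n hx)
    · rintro z ⟨v, hv, w, hw, rfl⟩
      exact keyM v hv w
    · simp
    · intro a b _ _ ha hb; rw [map_add, ha, hb, add_zero]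
    · intro c a _ ha; rw [map_smul, ha, smul_zero]
  -- `P ψ 1 = c_ψ • P 1 1` in an appropriate sense; first: if `P 1 1 = 0` then `P φ 1 = 0`
  have hP1 : ∀ m : ℕ, m ≠ 0 → ∀ x ∈ 𝒜 m, P (1 : H) x = 0 := fun m hm x hx =>
    hgraded 0 m (fun h => hm h.symm) 1 h1H x hx
  -- choose the scalar `c`
  set c : ℂ := if h : P (1 : H) (1 : H') = 0 then 0 else P φ 1 / P 1 1 with hc
  have hkey : P φ 1 = c * P (1 : H) (1 : H') := by
    by_cases h11 : P (1 : H) (1 : H') = 0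
    · -- show `P ψ 1 = 0` for all `ψ`, in particular `ψ = φ`
      have hall : ∀ ψ : H, P ψ 1 = 0 := by
        intro ψ
        have hψ : ψ ∈ ⨆ n, ℬ n := by
          rw [hdecH.submodule_iSup_eq_top]; trivial
        refine Submodule.iSup_induction (motive := fun ψ => P ψ 1 = 0) ℬ hψ ?_ (by simp) ?_
        · intro n ψ hψn
          cases n with
          | zero =>
            rw [h0, Submodule.mem_span_singleton] at hψn
            obtain ⟨a, rfl⟩ := hψn
            simp [h11]
          | succ n => exact hgraded (n + 1) 0 (Nat.succ_ne_zero n) ψ hψn 1 h1H'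
        · intro a b ha hb; rw [map_add, LinearMap.add_apply, ha, hb, add_zero]
      rw [hall, hc, dif_pos h11, zero_mul]
    · rw [hc, dif_neg h11, div_mul_cancel₀ _ h11]
  refine ⟨c, ?_⟩
  -- it suffices that `φ - c • 1` pairs to zero with everything
  have := hnondeg₁ (φ - c • 1) ?_
  · linear_combination (norm := module) this
  intro x
  have hx : x ∈ ⨆ n, 𝒜 n := by rw [hdecH'.submodule_iSup_eq_top]; trivial
  refine Submodule.iSup_induction (motive := fun x => P (φ - c • (1 : H)) x = 0) 𝒜 hx ?_ (by simp) ?_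
  · intro n x hxn
    cases n with
    | zero =>
      rw [h0', Submodule.mem_span_singleton] at hxn
      obtain ⟨a, rfl⟩ := hxn
      simp only [map_sub, map_smul, LinearMap.sub_apply, LinearMap.smul_apply,
        smul_eq_mul, hkey]
      ring
    | succ n =>
      simp only [map_sub, map_smul, LinearMap.sub_apply, LinearMap.smul_apply,
        claim1 n x hxn, hP1 (n + 1) (Nat.succ_ne_zero n) x hxn, smul_zero, sub_zero]
  · intro a b ha hb; rw [map_add, ha, hb, add_zero]
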